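/- For n = 2m > 2, no nonzero linear combination of products of singlets over noncrossing perfect matchings of {1,...,n} is a symmetric state. That is, if |ψ⟩ = Σ_P c_P |s_P⟩ (sum over noncrossing perfect matchings P) is invariant under all permutations of the tensor factors, then all c_P = 0. -/

import Mathlib

open Matrix BigOperators

noncomputable section

/-- An `n`-qubit state vector in `(ℂ²)^⊗n`, indexed by bit strings. -/
abbrev QState (n : ℕ) := (Fin n → Bool) → ℂ

/-- Tensor product of one-qubit matrices, as a matrix on `(ℂ²)^⊗n`. -/
def tens {n : ℕ} (M : Fin n → Matrix Bool Bool ℂ) :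
    Matrix (Fin n → Bool) (Fin n → Bool) ℂ :=
  fun I J => ∏ k, M k (I k) (J k)

/-- A one-qubit operator `M` acting on the `k`-th tensor factor. -/
def op1 {n : ℕ} (M : Matrix Bool Bool ℂ) (k : Fin n) :
    Matrix (Fin n → Bool) (Fin n → Bool) ℂ :=
  tens (fun j => if j = k then M else 1)

/-- Pauli X. -/
def PX : Matrix Bool Bool ℂ := fun a b => if a = b then 0 else 1

/-- Pauli Y. -/
def PY : Matrix Bool Bool ℂ :=
  fun a b => if a = b then 0 else (if b then -Complex.I else Complex.I)

/-- Pauli Z. -/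
def PZ : Matrix Bool Bool ℂ :=
  fun a b => if a = b then (if a then -1 else 1) else 0

/-- Hamming weight of a bit string. -/
def wt {n : ℕ} (I : Fin n → Bool) : ℕ :=
  (Finset.univ.filter fun k => I k = true).card

/-- The (unnormalized) Dicke state `|D_n^(k)⟩ = ∑_{wt I = k} |I⟩`. -/
def dicke (n k : ℕ) : QState n := fun I => if wt I = k then 1 else 0

/-- Computational basis vector `|I⟩`. -/
def ket {n : ℕ} (I : Fin n → Bool) : QState n := fun J => if J = I then 1 else 0

/-- Action of a permutation of the tensor factors on a state. -/
def permAct {n : ℕ} (σ : Equiv.Perm (Fin n)) (ψ : QState n) : QState n :=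
  fun I => ψ (I ∘ σ)

/-- The singlet state `|01⟩ - |10⟩` in `ℂ² ⊗ ℂ²`. -/
def singlet : QState 2 := fun I =>
  if I 0 = false ∧ I 1 = true then 1
  else if I 0 = true ∧ I 1 = false then -1 else 0

/-- `σ` encodes a perfect matching: a fixed-point-free involution. -/
def isMatching {n : ℕ} (σ : Equiv.Perm (Fin n)) : Prop :=
  (∀ k, σ k ≠ k) ∧ (∀ k, σ (σ k) = k)

/-- The matching encoded by `σ` is noncrossing. -/
def noncross {n : ℕ} (σ : Equiv.Perm (Fin n)) : Prop :=
  ¬ ∃ a c, a < c ∧ c < σ a ∧ σ a < σ c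

/-- The product of singlets `|s_P⟩` over the blocks of the matching `σ`:
the coefficient on `|I⟩` is nonzero iff every block joins a 0 to a 1,
and the sign is the product over blocks of `-1` if the smaller element
carries bit 1. -/
def sP {n : ℕ} (σ : Equiv.Perm (Fin n)) : QState n := fun I =>
  if ∀ k, I (σ k) = !(I k) then
    ∏ k ∈ Finset.univ.filter (fun k => k < σ k), (if I k then (-1 : ℂ) else 1)
  else 0

/-- The bit string `I_P`: 0 on the smaller and 1 on the larger element of
each block of the matching `σ`. -/
def IP {n : ℕ} (σ : Equiv.Perm (Fin n)) : Fin n → Bool := fun k => decide (σ k < k)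

section AuxCDC

open Finset

variable {n : ℕ}

/-! ### Basic lemmas about `sP` and `IP` -/

lemma alt_of_sP_ne {σ : Equiv.Perm (Fin n)} {I : Fin n → Bool} (h : sP σ I ≠ 0) :
    ∀ k, I (σ k) = !(I k) := by
  by_contra hc
  exact h (by simp only [sP, if_neg hc])

lemma sP_eq {σ : Equiv.Perm (Fin n)} {I : Fin n → Bool} (h : ∀ k, I (σ k) = !(I k)) :
    sP σ I = ∏ k ∈ Finset.univ.filter (fun k => k < σ k), (if I k then (-1 : ℂ) else 1) := by
  simp only [sP, if_pos h]

lemma IP_true_iff {σ : Equiv.Perm (Fin n)} {k : Fin n} : IP σ k = true ↔ σ k < k := by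
  simp [IP]

lemma IP_false_iff {σ : Equiv.Perm (Fin n)} {k : Fin n} : IP σ k = false ↔ ¬ σ k < k := by
  simp [IP]

lemma lt_of_IP_false {σ : Equiv.Perm (Fin n)} (hm : isMatching σ) {k : Fin n}
    (h : IP σ k = false) : k < σ k :=
  lt_of_le_of_ne (not_lt.mp (IP_false_iff.mp h)) (Ne.symm (hm.1 k))

lemma IP_apply {σ : Equiv.Perm (Fin n)} (hm : isMatching σ) (k : Fin n) :
    IP σ (σ k) = !(IP σ k) := by
  rcases (hm.1 k).lt_or_gt with h | h
  · simp only [IP]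
    rw [hm.2 k]
    simp [h, lt_asymm h]
  · simp only [IP]
    rw [hm.2 k]
    simp [h, lt_asymm h]

lemma cross_elim {σ : Equiv.Perm (Fin n)} (hnc : noncross σ) {a c : Fin n}
    (h1 : a < c) (h2 : c < σ a) (h3 : σ a < σ c) : False :=
  hnc ⟨a, c, h1, h2, h3⟩

/-! ### Flipping a block of a matching -/

def flip2 (a b : Fin n) (I : Fin n → Bool) : Fin n → Bool :=
  fun k => if k = a ∨ k = b then !(I k) else I k

lemma flip2_invol (a b : Fin n) (I : Fin n → Bool) : flip2 a b (flip2 a b I) = I := by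
  funext k
  by_cases h : k = a ∨ k = b <;> simp [flip2, h]

lemma alt_flip2 {σ : Equiv.Perm (Fin n)} (hm : isMatching σ) {I : Fin n → Bool} (a : Fin n)
    (halt : ∀ k, I (σ k) = !(I k)) :
    ∀ k, flip2 a (σ a) I (σ k) = !(flip2 a (σ a) I k) := by
  intro k
  by_cases hk : k = a ∨ k = σ a
  · have hσk : σ k = a ∨ σ k = σ a := by
      rcases hk with h | h
      · right; rw [h]
      · left; rw [h, hm.2]
    simp only [flip2, if_pos hk, if_pos hσk, halt k]
  · have hσk : ¬(σ k = a ∨ σ k = σ a) := by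
      rintro (h | h)
      · exact hk (Or.inr (by rw [← h, hm.2]))
      · exact hk (Or.inl (σ.injective h))
    simp only [flip2, if_neg hk, if_neg hσk]
    exact halt k

lemma sP_flip2 {σ : Equiv.Perm (Fin n)} (hm : isMatching σ) {a : Fin n} (ha : a < σ a)
    (I : Fin n → Bool) : sP σ (flip2 a (σ a) I) = - sP σ I := by
  by_cases halt : ∀ k, I (σ k) = !(I k)
  · have halt' := alt_flip2 hm a halt
    rw [sP_eq halt, sP_eq halt']
    have hmem : a ∈ Finset.univ.filter (fun k => k < σ k) := by simp [ha]
    rw [← Finset.mul_prod_erase _ _ hmem, ← Finset.mul_prod_erase _ _ hmem]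
    have hrest : ∀ k ∈ (Finset.univ.filter (fun k => k < σ k)).erase a,
        (if flip2 a (σ a) I k then (-1:ℂ) else 1) = (if I k then (-1:ℂ) else 1) := by
      intro k hk
      obtain ⟨hka, hkf⟩ := Finset.mem_erase.mp hk
      have hkmem : k < σ k := by simpa using hkf
      have hkb : k ≠ σ a := by
        intro h
        rw [h] at hkmem
        rw [hm.2] at hkmem
        exact lt_asymm ha hkmem
      simp [flip2, hka, hkb]
    rw [Finset.prod_congr rfl hrest]
    have hfa : flip2 a (σ a) I a = !(I a) := by simp [flip2]
    rw [hfa]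
    cases hIa : I a <;> simp [hIa] <;> ring
  · have halt2 : ¬ ∀ k, flip2 a (σ a) I (σ k) = !(flip2 a (σ a) I k) := by
      intro h
      apply halt
      have h2 := alt_flip2 hm a h
      rw [flip2_invol] at h2
      exact h2
    simp only [sP, if_neg halt, if_neg halt2, neg_zero]

lemma sum_sP_zero (hn : 0 < n) {σ : Equiv.Perm (Fin n)} (hm : isMatching σ) :
    ∑ I : Fin n → Bool, sP σ I = 0 := by
  have ha : (⟨0, hn⟩ : Fin n) < σ ⟨0, hn⟩ := by
    rcases (hm.1 ⟨0, hn⟩).lt_or_gt with h | h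
    · exact absurd h (by simp [Fin.lt_def])
    · exact h
  apply Finset.sum_ninvolution (fun I => flip2 ⟨0,hn⟩ (σ ⟨0,hn⟩) I)
  · intro I
    rw [sP_flip2 hm ha]
    ring
  · intro I _ h
    have h2 := congrFun h ⟨0, hn⟩
    simp [flip2] at h2
  · intro I
    exact Finset.mem_univ _
  · intro I
    exact flip2_invol _ _ _

/-! ### Weight lemmas -/

lemma wt_alt {σ : Equiv.Perm (Fin n)} (hm : isMatching σ) {I : Fin n → Bool}
    (halt : ∀ k, I (σ k) = !(I k)) : 2 * wt I = n := by
  have hcard : (Finset.univ.filter fun k : Fin n => I k = true).card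
      = (Finset.univ.filter fun k : Fin n => ¬ I k = true).card := by
    apply Finset.card_bij' (fun k _ => σ k) (fun k _ => σ k)
    · intro k hk
      simp only [Finset.mem_filter, Finset.mem_univ, true_and] at hk ⊢
      rw [halt k, hk]
      simp
    · intro k hk
      simp only [Finset.mem_filter, Finset.mem_univ, true_and] at hk ⊢
      rw [halt k]
      simp only [Bool.not_eq_true] at hk
      rw [hk]
      rfl
    · intro k _; exact hm.2 k
    · intro k _; exact hm.2 k
  have htot : (Finset.univ.filter fun k : Fin n => I k = true).card
      + (Finset.univ.filter fun k : Fin n => ¬ I k = true).card = n := by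
    have := Finset.card_filter_add_card_filter_not
      (s := (Finset.univ : Finset (Fin n))) (p := fun k => I k = true)
    simpa using this
  unfold wt
  omega

lemma exists_perm_of_wt_eq {I J : Fin n → Bool} (h : wt I = wt J) :
    ∃ π : Equiv.Perm (Fin n), I ∘ π = J := by
  have h1 : Fintype.card {k // J k = true} = Fintype.card {k // I k = true} := by
    rw [Fintype.card_subtype, Fintype.card_subtype]
    exact h.symm
  have h2 : Fintype.card {k // ¬ J k = true} = Fintype.card {k // ¬ I k = true} := by
    rw [Fintype.card_subtype_compl, Fintype.card_subtype_compl, h1]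
  let e1 := Fintype.equivOfCardEq h1
  refine ⟨e1.extendSubtype, ?_⟩
  funext k
  simp only [Function.comp_apply]
  by_cases hk : J k = true
  · rw [Equiv.extendSubtype_mem e1 k hk, hk]
  · have := Equiv.extendSubtype_not_mem e1 k hk
    simp only [Bool.not_eq_true] at this hk
    rw [this, hk]

end AuxCDC
section AuxCDC2

open Finset

variable {n : ℕ}

/-! ### The statistic -/

def statZ (σ : Equiv.Perm (Fin n)) : ℤ :=
  ∑ k ∈ Finset.univ.filter (fun k => k < σ k), (((σ k).val : ℤ) - (k.val : ℤ))

def statN (σ : Equiv.Perm (Fin n)) : ℕ :=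
  ∑ k ∈ Finset.univ.filter (fun k => k < σ k), ((σ k).val - k.val)

def Sw (w : Fin n → Bool) : ℤ :=
  ∑ k : Fin n, (if w k then (k.val : ℤ) else -(k.val : ℤ))

lemma statN_cast (σ : Equiv.Perm (Fin n)) : (statN σ : ℤ) = statZ σ := by
  rw [statN, statZ, Nat.cast_sum]
  apply Finset.sum_congr rfl
  intro k hk
  rw [Finset.mem_filter] at hk
  exact Nat.cast_sub (le_of_lt hk.2)

lemma statN_le (σ : Equiv.Perm (Fin n)) : statN σ ≤ n * n := by
  calc statN σ ≤ (Finset.univ.filter (fun k => k < σ k)).card • n := by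
        apply Finset.sum_le_card_nsmul
        intro k _
        have := (σ k).isLt
        omega
    _ ≤ n * n := by
        rw [smul_eq_mul]
        have h1 : (Finset.univ.filter (fun k : Fin n => k < σ k)).card ≤ n := by
          have := Finset.card_filter_le (Finset.univ : Finset (Fin n)) (fun k => k < σ k)
          simpa using this
        exact Nat.mul_le_mul_right n h1

lemma pair_sum {M : Type} [AddCommMonoid M] {σ : Equiv.Perm (Fin n)} (hm : isMatching σ)
    (f : Fin n → M) :
    ∑ k, f k = ∑ k ∈ Finset.univ.filter (fun k => k < σ k), (f k + f (σ k)) := by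
  rw [Finset.sum_add_distrib]
  rw [← Finset.sum_filter_add_sum_filter_not Finset.univ (fun k => k < σ k) f]
  congr 1
  have himg : (Finset.univ.filter (fun k => k < σ k)).image σ
      = Finset.univ.filter (fun k => ¬ k < σ k) := by
    ext j
    simp only [Finset.mem_image, Finset.mem_filter, Finset.mem_univ, true_and]
    constructor
    · rintro ⟨k, hk, rfl⟩
      rw [hm.2 k]
      exact lt_asymm hk
    · intro hj
      refine ⟨σ j, ?_, hm.2 j⟩
      rw [hm.2 j]
      exact lt_of_le_of_ne (not_lt.mp hj) (hm.1 j)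
  rw [← himg, Finset.sum_image (fun a _ b _ hab => σ.injective hab)]

lemma Sw_IP {σ : Equiv.Perm (Fin n)} (hm : isMatching σ) : Sw (IP σ) = statZ σ := by
  rw [Sw, pair_sum hm, statZ]
  apply Finset.sum_congr rfl
  intro k hk
  rw [Finset.mem_filter] at hk
  have h1 : IP σ k = false := IP_false_iff.mpr (lt_asymm hk.2)
  have h2 : IP σ (σ k) = true := by rw [IP_apply hm, h1]; rfl
  rw [h1, h2]
  simp
  ring

lemma Sw_le_statZ {τ : Equiv.Perm (Fin n)} (hm : isMatching τ) {w : Fin n → Bool}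
    (halt : ∀ k, w (τ k) = !(w k)) : Sw w ≤ statZ τ := by
  rw [Sw, pair_sum hm, statZ]
  apply Finset.sum_le_sum
  intro k hk
  rw [Finset.mem_filter] at hk
  have hlt : (k.val : ℤ) < ((τ k).val : ℤ) := by exact_mod_cast hk.2
  rw [halt k]
  cases hw : w k <;> simp <;> omega

lemma Sw_lt_statZ {τ : Equiv.Perm (Fin n)} (hm : isMatching τ) {w : Fin n → Bool}
    (halt : ∀ k, w (τ k) = !(w k)) (hex : ∃ k, k < τ k ∧ w k = true) :
    Sw w < statZ τ := by
  rw [Sw, pair_sum hm, statZ]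
  apply Finset.sum_lt_sum
  · intro k hk
    rw [Finset.mem_filter] at hk
    have hlt : (k.val : ℤ) < ((τ k).val : ℤ) := by exact_mod_cast hk.2
    rw [halt k]
    cases hw : w k <;> simp <;> omega
  · obtain ⟨k, hk1, hk2⟩ := hex
    refine ⟨k, by simp [hk1], ?_⟩
    have hlt : (k.val : ℤ) < ((τ k).val : ℤ) := by exact_mod_cast hk1
    rw [halt k, hk2]
    simp
    omega

lemma IP_eq_of_ordered {τ : Equiv.Perm (Fin n)} (hm : isMatching τ) {w : Fin n → Bool}
    (halt : ∀ k, w (τ k) = !(w k)) (hord : ∀ k, k < τ k → w k = false) : IP τ = w := by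
  funext k
  rcases (hm.1 k).lt_or_gt with h | h
  · -- τ k < k
    have h1 : IP τ k = true := IP_true_iff.mpr h
    have h2 : τ k < τ (τ k) := by rw [hm.2]; exact h
    have h3 : w (τ k) = false := hord (τ k) h2
    have h4 := halt (τ k)
    rw [hm.2, h3] at h4
    rw [h1, h4]
    rfl
  · have h1 : IP τ k = false := IP_false_iff.mpr (lt_asymm h)
    rw [h1, hord k h]

/-! ### Counting and the uniqueness of noncrossing matchings with given word -/

def cnt (w : Fin n → Bool) (b : Bool) (i j : Fin n) : ℕ :=
  (Finset.univ.filter (fun k => i < k ∧ k ≤ j ∧ w k = b)).card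

lemma cnt_L2 {σ : Equiv.Perm (Fin n)} (hm : isMatching σ) (hnc : noncross σ)
    {i j : Fin n} (hj : j < σ i) :
    cnt (IP σ) true i j ≤ cnt (IP σ) false i j := by
  rw [cnt, cnt]
  apply Finset.card_le_card_of_injOn σ
  · intro k hk
    simp only [Finset.mem_coe, Finset.mem_filter, Finset.mem_univ, true_and] at hk ⊢
    obtain ⟨hik, hkj, hwk⟩ := hk
    have hcl : σ k < k := IP_true_iff.mp hwk
    have hkσi : k < σ i := lt_of_le_of_lt hkj hj
    have hne : σ k ≠ i := by
      intro h
      have : k = σ i := by rw [← h, hm.2]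
      rw [this] at hkσi
      exact lt_irrefl _ hkσi
    have hnl : ¬ σ k < i := by
      intro h
      apply cross_elim hnc h (c := i)
      · rw [hm.2]; exact hik
      · rw [hm.2]; exact hkσi
    refine ⟨lt_of_le_of_ne (not_lt.mp hnl) (Ne.symm hne), le_of_lt (lt_of_lt_of_le hcl hkj), ?_⟩
    rw [IP_apply hm, hwk]
    rfl
  · intro a _ b _ hab
    exact σ.injective hab

lemma cnt_L1 {σ : Equiv.Perm (Fin n)} (hm : isMatching σ) (hnc : noncross σ)
    {i : Fin n} (hi : i < σ i) :
    cnt (IP σ) true i (σ i) = cnt (IP σ) false i (σ i) + 1 := by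
  have hIPi : IP σ i = false := IP_false_iff.mpr (lt_asymm hi)
  have hIPσi : IP σ (σ i) = true := by rw [IP_apply hm, hIPi]; rfl
  have hmem : σ i ∈ Finset.univ.filter (fun k => i < k ∧ k ≤ σ i ∧ IP σ k = true) := by
    simp [hi, hIPσi]
  rw [cnt, cnt, ← Finset.card_erase_add_one hmem]
  congr 1
  apply Finset.card_bij' (fun k _ => σ k) (fun k _ => σ k)
  · intro k hk
    rw [Finset.mem_erase] at hk
    obtain ⟨hkne, hk⟩ := hk
    simp only [Finset.mem_filter, Finset.mem_univ, true_and] at hk ⊢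
    obtain ⟨hik, hkj, hwk⟩ := hk
    have hcl : σ k < k := IP_true_iff.mp hwk
    have hkσi : k < σ i := lt_of_le_of_ne hkj hkne
    have hne : σ k ≠ i := by
      intro h
      have : k = σ i := by rw [← h, hm.2]
      exact hkne this
    have hnl : ¬ σ k < i := by
      intro h
      apply cross_elim hnc h (c := i)
      · rw [hm.2]; exact hik
      · rw [hm.2]; exact hkσi
    refine ⟨lt_of_le_of_ne (not_lt.mp hnl) (Ne.symm hne), le_of_lt (lt_of_lt_of_le hcl hkj), ?_⟩
    rw [IP_apply hm, hwk]
    rfl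
  · intro k hk
    simp only [Finset.mem_filter, Finset.mem_univ, true_and] at hk
    obtain ⟨hik, hkj, hwk⟩ := hk
    have hop : k < σ k := lt_of_IP_false hm hwk
    have hkne : k ≠ σ i := by
      intro h
      rw [h, hIPσi] at hwk
      simp at hwk
    have hkσi : k < σ i := lt_of_le_of_ne hkj hkne
    rw [Finset.mem_erase]
    constructor
    · intro h
      exact (ne_of_gt hik) (σ.injective h)
    simp only [Finset.mem_filter, Finset.mem_univ, true_and]
    have hσkσi : σ k < σ i := by
      have hne : σ k ≠ σ i := fun h => (ne_of_gt hik) (σ.injective h)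
      have hnl : ¬ σ i < σ k := fun h => cross_elim hnc hik hkσi h
      exact lt_of_le_of_ne (not_lt.mp hnl) hne
    refine ⟨lt_trans hik hop, le_of_lt hσkσi, ?_⟩
    rw [IP_apply hm, hwk]
    rfl
  · intro k _; exact hm.2 k
  · intro k _; exact hm.2 k

lemma opener_unique {σ τ : Equiv.Perm (Fin n)} (hmσ : isMatching σ) (hncσ : noncross σ)
    (hmτ : isMatching τ) (hncτ : noncross τ) (hw : IP σ = IP τ)
    {i : Fin n} (hiσ : i < σ i) (hiτ : i < τ i) : σ i = τ i := by
  by_contra hne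
  rcases Ne.lt_or_gt hne with h | h
  · have h1 := cnt_L1 hmσ hncσ hiσ
    have h2 := cnt_L2 hmτ hncτ (i := i) (j := σ i) h
    rw [← hw] at h2
    omega
  · have h1 := cnt_L1 hmτ hncτ hiτ
    have h2 := cnt_L2 hmσ hncσ (i := i) (j := τ i) h
    rw [hw] at h2
    omega

lemma matching_eq_of_IP_eq {σ τ : Equiv.Perm (Fin n)} (hmσ : isMatching σ) (hncσ : noncross σ)
    (hmτ : isMatching τ) (hncτ : noncross τ) (hw : IP σ = IP τ) : σ = τ := by
  have key : ∀ i, i < σ i → σ i = τ i := by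
    intro i hi
    have hiτ : i < τ i := by
      apply lt_of_IP_false hmτ
      rw [← hw]
      exact IP_false_iff.mpr (lt_asymm hi)
    exact opener_unique hmσ hncσ hmτ hncτ hw hi hiτ
  apply Equiv.ext
  intro k
  rcases (hmσ.1 k).lt_or_gt with h | h
  · -- σ k < k
    have h2 : σ k < σ (σ k) := by rw [hmσ.2]; exact h
    have h3 := key (σ k) h2
    rw [hmσ.2] at h3
    -- h3 : k = τ (σ k)
    have h4 : τ k = σ k := by
      nth_rewrite 1 [h3]
      rw [hmτ.2]
    exact h4.symm
  · exact key k h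

lemma sP_IP {σ : Equiv.Perm (Fin n)} (hm : isMatching σ) : sP σ (IP σ) = 1 := by
  rw [sP_eq (IP_apply hm)]
  apply Finset.prod_eq_one
  intro k hk
  rw [Finset.mem_filter] at hk
  have h1 : IP σ k = false := IP_false_iff.mpr (lt_asymm hk.2)
  rw [h1]
  rfl

end AuxCDC2

/-- For `n = 2m > 2`, no nonzero linear combination of singlet
products over noncrossing perfect matchings is symmetric: if
`ψ = ∑_P c_P |s_P⟩` is invariant under all permutations of the tensor
factors, then all `c_P = 0`. -/
theorem no_symmetric_cdc (m : ℕ) (hm : 1 < m)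
    (c : Equiv.Perm (Fin (2 * m)) → ℂ)
    (hc : ∀ σ, ¬(isMatching σ ∧ noncross σ) → c σ = 0)
    (ψ : QState (2 * m))
    (hψ : ψ = ∑ σ : Equiv.Perm (Fin (2 * m)), c σ • sP σ)
    (hsym : ∀ π : Equiv.Perm (Fin (2 * m)), permAct π ψ = ψ) :
    ∀ σ, c σ = 0 := by
  have hmpos : 0 < 2 * m := by omega
  -- Step 1: ψ vanishes off weight m
  have hoffm : ∀ I : Fin (2 * m) → Bool, wt I ≠ m → ψ I = 0 := by
    intro I hI
    rw [hψ, Finset.sum_apply]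
    apply Finset.sum_eq_zero
    intro τ _
    rw [Pi.smul_apply, smul_eq_mul]
    by_cases hcτ : c τ = 0
    · rw [hcτ, zero_mul]
    · by_cases hs : sP τ I = 0
      · rw [hs, mul_zero]
      · exfalso
        have hAB : isMatching τ ∧ noncross τ := by
          by_contra h
          exact hcτ (hc τ h)
        have halt := alt_of_sP_ne hs
        have := wt_alt hAB.1 halt
        omega
  -- Step 2: the total sum of ψ vanishes
  have hsum0 : ∑ I : Fin (2 * m) → Bool, ψ I = 0 := by
    rw [hψ]
    have hpt : ∀ I : Fin (2 * m) → Bool,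
        (∑ τ : Equiv.Perm (Fin (2 * m)), c τ • sP τ) I
          = ∑ τ : Equiv.Perm (Fin (2 * m)), c τ * sP τ I := by
      intro I
      rw [Finset.sum_apply]
      apply Finset.sum_congr rfl
      intro τ _
      rfl
    rw [Finset.sum_congr rfl (fun I _ => hpt I), Finset.sum_comm]
    apply Finset.sum_eq_zero
    intro τ _
    rw [← Finset.mul_sum]
    by_cases hcτ : c τ = 0
    · rw [hcτ, zero_mul]
    · have hAB : isMatching τ ∧ noncross τ := by
        by_contra h
        exact hcτ (hc τ h)
      rw [sum_sP_zero hmpos hAB.1, mul_zero]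
  -- Step 3: ψ = 0
  have hψ0 : ψ = 0 := by
    funext I
    show ψ I = 0
    by_cases hI : wt I = m
    · have hconst : ∀ J ∈ Finset.univ.filter (fun J : Fin (2 * m) → Bool => wt J = m),
          ψ J = ψ I := by
        intro J hJ
        rw [Finset.mem_filter] at hJ
        obtain ⟨π, hπ⟩ := exists_perm_of_wt_eq (show wt J = wt I by rw [hJ.2, hI])
        have h1 := congrFun (hsym π) J
        rw [show (permAct π ψ) J = ψ (J ∘ π) from rfl, hπ] at h1
        exact h1.symm
      have hsplit : ∑ J ∈ Finset.univ.filter (fun J : Fin (2 * m) → Bool => wt J = m), ψ J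
          = 0 := by
        rw [← hsum0]
        apply Finset.sum_filter_of_ne
        intro J _ hne
        by_contra h
        exact hne (hoffm J h)
      rw [Finset.sum_congr rfl hconst, Finset.sum_const, nsmul_eq_mul] at hsplit
      have hmem : I ∈ Finset.univ.filter (fun J : Fin (2 * m) → Bool => wt J = m) := by
        simp [hI]
      have hcard := Finset.card_ne_zero_of_mem hmem
      rcases mul_eq_zero.mp hsplit with h | h
      · exact absurd (Nat.cast_eq_zero.mp h) hcard
      · exact h
    · exact hoffm I hI
  -- Step 4: linear independence via triangularity
  have bound : ∀ τ : Equiv.Perm (Fin (2 * m)), statN τ ≤ 2 * m * (2 * m) := fun τ => statN_le τ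
  have main : ∀ t : ℕ, ∀ τ : Equiv.Perm (Fin (2 * m)), isMatching τ → noncross τ →
      2 * m * (2 * m) + 1 ≤ statN τ + t → c τ = 0 := by
    intro t
    induction t with
    | zero =>
      intro τ _ _ hK
      have := bound τ
      omega
    | succ t ih =>
      intro τ hmτ hncτ hK
      by_cases hK' : 2 * m * (2 * m) + 1 ≤ statN τ + t
      · exact ih τ hmτ hncτ hK'
      · have heval : ∑ ρ : Equiv.Perm (Fin (2 * m)), c ρ * sP ρ (IP τ) = 0 := by
          have h2 : (∑ σ' : Equiv.Perm (Fin (2 * m)), c σ' • sP σ') (IP τ) = 0 := by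
            rw [← hψ, hψ0]
            rfl
          rw [Finset.sum_apply] at h2
          rw [← h2]
          apply Finset.sum_congr rfl
          intro ρ _
          rfl
        rw [← Finset.add_sum_erase _ _ (Finset.mem_univ τ), sP_IP hmτ, mul_one] at heval
        have hrest : ∑ ρ ∈ Finset.univ.erase τ, c ρ * sP ρ (IP τ) = 0 := by
          apply Finset.sum_eq_zero
          intro ρ hρ
          have hρτ : ρ ≠ τ := (Finset.mem_erase.mp hρ).1
          by_cases hcρ : c ρ = 0
          · rw [hcρ, zero_mul]
          · have hAB : isMatching ρ ∧ noncross ρ := by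
              by_contra h
              exact hcρ (hc ρ h)
            by_cases hs : sP ρ (IP τ) = 0
            · rw [hs, mul_zero]
            · have halt := alt_of_sP_ne hs
              by_cases hord : ∀ k, k < ρ k → IP τ k = false
              · exfalso
                exact hρτ (matching_eq_of_IP_eq hAB.1 hAB.2 hmτ hncτ
                  (IP_eq_of_ordered hAB.1 halt hord))
              · push_neg at hord
                obtain ⟨k, hk1, hk2⟩ := hord
                have hk2' : IP τ k = true := by
                  revert hk2
                  cases IP τ k <;> simp
                have h1 : Sw (IP τ) < statZ ρ := Sw_lt_statZ hAB.1 halt ⟨k, hk1, hk2'⟩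
                rw [Sw_IP hmτ] at h1
                have h2 : statN τ < statN ρ := by
                  have hτ := statN_cast τ
                  have hρ2 := statN_cast ρ
                  rw [← hτ, ← hρ2] at h1
                  exact_mod_cast h1
                rw [ih ρ hAB.1 hAB.2 (by omega), zero_mul]
        rw [hrest, add_zero] at heval
        exact heval
  intro σ
  by_cases h : isMatching σ ∧ noncross σ
  · exact main (2 * m * (2 * m) + 1) σ h.1 h.2 (Nat.le_add_left _ _)
  · exact hc σ h
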